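/- Let n be a nonnegative integer and let a, b be complex numbers such that b + 1/2 and a − n + 1/2 are not nonpositive integers and none of a + 1/2, b − a + 1/2, b + n + 1/2, a − n + 1/2, b + 1/2, b − a + n + 1/2 is a pole of Γ. Then the terminating series satisfies ₃F₂(a, b, −n; b + 1/2, a − n + 1/2; 1) = √π · Γ(a − n + 1/2) Γ(b + 1/2) Γ(b − a + n + 1/2) / (Γ(a + 1/2) Γ(1/2 − n) Γ(b − a + 1/2) Γ(b + n + 1/2)). -/

import Mathlib

open Complex Finset

/-- The generalized hypergeometric series ₃F₂(a₁,a₂,a₃; b₁,b₂; 1) over ℂ. -/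
noncomputable def hyp3F2 (a₁ a₂ a₃ b₁ b₂ : ℂ) : ℂ :=
  ∑' k : ℕ,
    ((ascPochhammer ℂ k).eval a₁ * (ascPochhammer ℂ k).eval a₂ * (ascPochhammer ℂ k).eval a₃) /
    ((ascPochhammer ℂ k).eval b₁ * (ascPochhammer ℂ k).eval b₂ * (Nat.factorial k : ℂ))

/-- `x` is not a nonpositive integer (equivalently, not a pole of Γ). -/
def NotNonposInt (x : ℂ) : Prop := ∀ m : ℕ, x ≠ -(m : ℂ)

noncomputable def pc (x : ℂ) (k : ℕ) : ℂ := (ascPochhammer ℂ k).eval x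

lemma pc_zero (x : ℂ) : pc x 0 = 1 := by simp [pc]

lemma pc_one (x : ℂ) : pc x 1 = x := by simp [pc, ascPochhammer_one]

lemma pc_succ (x : ℂ) (k : ℕ) : pc x (k + 1) = pc x k * (x + k) :=
  ascPochhammer_succ_eval k x

lemma pc_add (x : ℂ) (k m : ℕ) : pc x (k + m) = pc x k * pc (x + k) m := by
  induction m with
  | zero => simp [pc_zero]
  | succ m ih =>
    rw [← add_assoc, pc_succ, ih, pc_succ]
    push_cast
    ring

lemma pc_succ_left (x : ℂ) (m : ℕ) : pc x (m + 1) = x * pc (x + 1) m := by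
  rw [add_comm m 1, pc_add, pc_one]
  norm_num

lemma pc_refl (x : ℂ) (n : ℕ) : ∀ k ≤ n, pc x (n - k) * pc (1 - x - n) k = (-1) ^ k * pc x n := by
  intro k
  induction k with
  | zero => simp [pc_zero]
  | succ k ih =>
    intro hk
    have hk' : k ≤ n := by omega
    have e1 : n - k = (n - (k + 1)) + 1 := by omega
    have IH := ih hk'
    rw [e1, pc_succ] at IH
    rw [pc_succ]
    have hc : ((n - (k + 1) : ℕ) : ℂ) = (n : ℂ) - k - 1 := by
      have : ((n - (k+1) : ℕ) : ℂ) = ((n : ℕ) : ℂ) - ((k+1 : ℕ) : ℂ) := by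
        rw [Nat.cast_sub hk]
      rw [this]; push_cast; ring
    rw [hc] at IH
    calc pc x (n - (k + 1)) * (pc (1 - x - n) k * (1 - x - n + k))
        = -(pc x (n - (k+1)) * (x + ((n:ℂ) - k - 1)) * pc (1 - x - n) k) := by ring
      _ = -((-1)^k * pc x n) := by rw [IH]
      _ = (-1)^(k+1) * pc x n := by ring

lemma pc_ne_zero (x : ℂ) (N : ℕ) (h : ∀ j : ℕ, j < N → x + j ≠ 0) : pc x N ≠ 0 := by
  induction N with
  | zero => simp [pc_zero]
  | succ N ih =>
    rw [pc_succ]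
    exact mul_ne_zero (ih (fun j hj => h j (by omega))) (h N (by omega))

lemma pc_neg_nat_eq (n k : ℕ) (hk : k ≤ n) :
    pc (-(n : ℂ)) k = (-1) ^ k * (n.choose k : ℂ) * (k.factorial : ℂ) := by
  have h := pc_refl 1 n k hk
  have harg : (1 : ℂ) - 1 - n = -(n : ℂ) := by ring
  rw [harg] at h
  have h1 : pc (1 : ℂ) (n - k) = ((n - k).factorial : ℂ) := ascPochhammer_eval_one ℂ (n - k)
  have h2 : pc (1 : ℂ) n = (n.factorial : ℂ) := ascPochhammer_eval_one ℂ n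
  rw [h1, h2] at h
  have h3 : (n.factorial : ℂ) = (n.choose k : ℂ) * (k.factorial : ℂ) * ((n - k).factorial : ℂ) := by
    exact_mod_cast congrArg (Nat.cast : ℕ → ℂ) (Nat.choose_mul_factorial_mul_factorial hk).symm
  have hne : ((n - k).factorial : ℂ) ≠ 0 := by exact_mod_cast (n - k).factorial_ne_zero
  apply mul_right_cancel₀ hne
  rw [mul_comm] at h
  rw [h, h3]
  ring

lemma pc_neg_nat_vanish (n k : ℕ) (h : n < k) : pc (-(n : ℂ)) k = 0 := by
  have e : k = (n + 1) + (k - (n + 1)) := by omega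
  rw [e, pc_add, pc_succ]
  have : -(n : ℂ) + n = 0 := by ring
  rw [this, mul_zero, zero_mul]

noncomputable def Fk (a b c : ℂ) (n k : ℕ) : ℂ :=
  (n.choose k : ℂ) * pc a k * pc b k * pc (c - a - b) (n - k) * pc (c + k) (n - k)

lemma Fk_vanish (a b c : ℂ) {n k : ℕ} (h : n < k) : Fk a b c n k = 0 := by
  simp [Fk, Nat.choose_eq_zero_of_lt h]

lemma key1 (a b c : ℂ) (n j : ℕ) (hj : j ≤ n) :
    Fk a b c (n+1) (j+1) + (a + j + 1) * (b + j + 1) * Fk a b c n (j+1)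
      = (c - a + n) * (c - b + n) * Fk a b c n (j+1) + (a + j) * (b + j) * Fk a b c n j := by
  rcases eq_or_lt_of_le hj with rfl | hlt
  · have hv : Fk a b c j (j+1) = 0 := Fk_vanish a b c (by omega)
    rw [hv]
    have e1 : (j+1) - (j+1) = 0 := by omega
    have e2 : j - j = 0 := by omega
    simp only [Fk, e1, e2, pc_zero, Nat.choose_self, Nat.cast_one, pc_succ]
    push_cast
    ring
  · obtain ⟨m, rfl⟩ : ∃ m, n = j + 1 + m := ⟨n - j - 1, by omega⟩
    have e1 : j + 1 + m - (j + 1) = m := by omega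
    have e2 : j + 1 + m + 1 - (j + 1) = m + 1 := by omega
    have e3 : j + 1 + m - j = m + 1 := by omega
    have hpas : (j + 1 + m + 1).choose (j + 1) = (j + 1 + m).choose j + (j + 1 + m).choose (j + 1) := by
      have := Nat.choose_succ_succ (j + m + 1) j
      simpa [Nat.add_assoc, Nat.add_comm, Nat.add_left_comm] using this
    have hrel : ((j + 1 + m).choose (j+1) : ℂ) * (j + 1) = ((j + 1 + m).choose j : ℂ) * (m + 1) := by
      have := Nat.choose_succ_right_eq (j + 1 + m) j
      have h2 : j + 1 + m - j = m + 1 := by omega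
      rw [h2] at this
      exact_mod_cast congrArg (Nat.cast : ℕ → ℂ) this
    simp only [Fk, e1, e2, e3, hpas]
    rw [pc_succ a j, pc_succ b j, pc_succ (c - a - b) m,
        pc_succ (c + ((j:ℕ)+1 : ℕ)) m, pc_succ_left (c + (j:ℂ)) m]
    push_cast
    have harg : c + ((j:ℂ) + 1) = c + (j:ℂ) + 1 := by ring
    rw [harg]
    linear_combination (-(pc a j * (a + (j:ℂ)) * pc b j * (b + (j:ℂ)) * pc (c - a - b) m *
      pc (c + (j:ℂ) + 1) m * (c - a - b + (m:ℂ)))) * hrel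

lemma key0 (a b c : ℂ) (n : ℕ) :
    Fk a b c (n+1) 0 = (c - a + n) * (c - b + n) * Fk a b c n 0 - a * b * Fk a b c n 0 := by
  simp only [Fk, Nat.choose_zero_right, Nat.cast_one, pc_zero, Nat.sub_zero, Nat.cast_zero]
  rw [pc_succ (c - a - b) n, pc_succ (c + 0) n]
  push_cast
  ring

lemma saalschutz (a b c : ℂ) : ∀ n : ℕ,
    ∑ k ∈ range (n+1), Fk a b c n k = pc (c - a) n * pc (c - b) n := by
  intro n
  induction n with
  | zero => simp [Fk, pc_zero]
  | succ n ih =>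
    have T : ℕ → ℂ := fun j => (a + j) * (b + j) * Fk a b c n j
    rw [Finset.sum_range_succ']
    have hstep : ∀ j ∈ range (n+1),
        Fk a b c (n+1) (j+1) = (c - a + n) * (c - b + n) * Fk a b c n (j+1) +
          ((fun i => (a + i) * (b + i) * Fk a b c n i) j -
           (fun i => (a + i) * (b + i) * Fk a b c n i) (j+1)) := by
      intro j hj
      have hj' : j ≤ n := by simpa using Nat.lt_succ_iff.mp (Finset.mem_range.mp hj)
      have := key1 a b c n j hj'
      push_cast
      linear_combination this
    rw [Finset.sum_congr rfl hstep, Finset.sum_add_distrib,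
        Finset.sum_range_sub' (fun i => (a + i) * (b + i) * Fk a b c n i) (n+1)]
    rw [← Finset.mul_sum, key0 a b c n]
    have hsum : ∑ j ∈ range (n+1), Fk a b c n (j+1) =
        (∑ k ∈ range (n+1), Fk a b c n k) - Fk a b c n 0 := by
      have hA := Finset.sum_range_succ' (fun k => Fk a b c n k) (n+1)
      have hB := Finset.sum_range_succ (fun k => Fk a b c n k) (n+1)
      have h0 : Fk a b c n (n+1) = 0 := Fk_vanish a b c (by omega)
      rw [h0, add_zero] at hB
      linear_combination hB - hA
    rw [hsum, ih]
    have h0 : Fk a b c n (n+1) = 0 := Fk_vanish a b c (by omega)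
    rw [pc_succ (c - a) n, pc_succ (c - b) n]
    simp only [Nat.cast_zero, add_zero, h0, Nat.cast_add, Nat.cast_one]
    ring

theorem stmt0 (n : ℕ) (a b : ℂ)
    (h1 : NotNonposInt (b + 1/2)) (h2 : NotNonposInt (a - n + 1/2))
    (h3 : NotNonposInt (a + 1/2)) (h4 : NotNonposInt (b - a + 1/2))
    (h5 : NotNonposInt (b + n + 1/2)) (h6 : NotNonposInt (b - a + n + 1/2)) :
    hyp3F2 a b (-(n : ℂ)) (b + 1/2) (a - (n : ℂ) + 1/2) =
      (Real.sqrt Real.pi : ℂ) * Complex.Gamma (a - n + 1/2) * Complex.Gamma (b + 1/2) *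
        Complex.Gamma (b - a + n + 1/2) /
      (Complex.Gamma (a + 1/2) * Complex.Gamma (1/2 - n) * Complex.Gamma (b - a + 1/2) *
        Complex.Gamma (b + n + 1/2)) := by
  have hfac : ∀ k : ℕ, (k.factorial : ℂ) ≠ 0 := fun k => by exact_mod_cast k.factorial_ne_zero
  have hpcC : ∀ k : ℕ, pc (b + 1/2) k ≠ 0 := by
    intro k
    refine pc_ne_zero _ _ (fun j _ hc => h1 j ?_)
    linear_combination hc
  have hpcA : ∀ k : ℕ, pc (a - n + 1/2) k ≠ 0 := by
    intro k
    refine pc_ne_zero _ _ (fun j _ hc => h2 j ?_)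
    linear_combination hc
  have hpcE : pc (1/2 - a) n ≠ 0 := by
    refine pc_ne_zero _ _ (fun j hj hc => h2 (n - (j+1)) ?_)
    have hcast : ((n - (j+1) : ℕ) : ℂ) = (n : ℂ) - ((j:ℂ) + 1) := by
      rw [Nat.cast_sub (by omega)]; push_cast; ring
    rw [hcast]
    linear_combination -hc
  unfold hyp3F2
  rw [tsum_eq_sum (s := Finset.range (n+1)) (fun k hk => by
    have hnk : n < k := by simpa using hk
    have hz : (ascPochhammer ℂ k).eval (-(n:ℂ)) = 0 := pc_neg_nat_vanish n k hnk
    rw [hz, mul_zero, zero_div])]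
  have hterm : ∀ k ∈ Finset.range (n+1),
      ((ascPochhammer ℂ k).eval a * (ascPochhammer ℂ k).eval b *
        (ascPochhammer ℂ k).eval (-(n:ℂ))) /
      ((ascPochhammer ℂ k).eval (b + 1/2) * (ascPochhammer ℂ k).eval (a - (n:ℂ) + 1/2) *
        (k.factorial : ℂ)) =
      Fk a b (b + 1/2) n k / (pc (b + 1/2) n * pc (1/2 - a) n) := by
    intro k hk
    have hkn : k ≤ n := by
      have := Finset.mem_range.mp hk; omega
    have hck : pc (b + 1/2) k * pc (b + 1/2 + k) (n - k) = pc (b + 1/2) n := by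
      have h := pc_add (b + 1/2) k (n - k)
      rw [Nat.add_sub_cancel' hkn] at h
      exact h.symm
    have he : pc (1/2 - a) (n - k) * pc (a - (n:ℂ) + 1/2) k = (-1)^k * pc (1/2 - a) n := by
      have h := pc_refl (1/2 - a) n k hkn
      rwa [show (1:ℂ) - (1/2 - a) - n = a - (n:ℂ) + 1/2 from by ring] at h
    have hneg : pc (-(n:ℂ)) k = (-1)^k * (n.choose k : ℂ) * (k.factorial : ℂ) :=
      pc_neg_nat_eq n k hkn
    have hs : ((-1:ℂ))^k * (-1)^k = 1 := by rw [← mul_pow]; norm_num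
    have hEn : pc (1/2 - a) n = (-1)^k * (pc (1/2 - a) (n - k) * pc (a - (n:ℂ) + 1/2) k) := by
      rw [he, ← mul_assoc, hs, one_mul]
    show pc a k * pc b k * pc (-(n:ℂ)) k /
        (pc (b + 1/2) k * pc (a - (n:ℂ) + 1/2) k * (k.factorial : ℂ)) = _
    rw [div_eq_div_iff (mul_ne_zero (mul_ne_zero (hpcC k) (hpcA k)) (hfac k))
      (mul_ne_zero (hpcC n) hpcE)]
    simp only [Fk]
    rw [show (b + 1/2 - a - b : ℂ) = 1/2 - a from by ring, hneg, hEn, ← hck]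
    linear_combination (pc a k * pc b k * (n.choose k : ℂ) * (k.factorial : ℂ) *
      pc (b + 1/2) k * pc (b + 1/2 + (k:ℂ)) (n - k) * pc (1/2 - a) (n - k) *
      pc (a - (n:ℂ) + 1/2) k) * hs
  rw [Finset.sum_congr rfl hterm, ← Finset.sum_div, saalschutz a b (b + 1/2) n]
  rw [show (b + 1/2 - a : ℂ) = b - a + 1/2 from by ring,
      show (b + 1/2 - b : ℂ) = (1/2 : ℂ) from by ring]
  have gshift : ∀ (z : ℂ), (∀ m : ℕ, z ≠ -(m:ℂ)) → ∀ N : ℕ,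
      Complex.Gamma (z + N) = pc z N * Complex.Gamma z := by
    intro z hz N
    induction N with
    | zero => simp [pc_zero]
    | succ N ih =>
      have harg : z + ((N+1 : ℕ) : ℂ) = (z + N) + 1 := by push_cast; ring
      rw [harg, Complex.Gamma_add_one _ (fun h => hz N (by linear_combination h)), ih, pc_succ]
      ring
  have hhalf : ∀ m : ℕ, (1/2 : ℂ) - n ≠ -(m:ℂ) := by
    intro m h
    have h2' : ((2*n : ℕ) : ℂ) = ((2*m + 1 : ℕ) : ℂ) := by push_cast; linear_combination -2*h
    have := Nat.cast_injective (R := ℂ) h2'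
    omega
  have hG2 : Complex.Gamma (b + n + 1/2) = pc (b + 1/2) n * Complex.Gamma (b + 1/2) := by
    rw [show b + (n:ℂ) + 1/2 = (b + 1/2) + n from by ring]; exact gshift _ h1 n
  have hG6 : Complex.Gamma (b - a + n + 1/2)
      = pc (b - a + 1/2) n * Complex.Gamma (b - a + 1/2) := by
    rw [show b - a + (n:ℂ) + 1/2 = (b - a + 1/2) + n from by ring]; exact gshift _ h4 n
  have hG3 : Complex.Gamma (a + 1/2) = pc (a - n + 1/2) n * Complex.Gamma (a - n + 1/2) := by
    rw [show a + 1/2 = (a - (n:ℂ) + 1/2) + n from by ring]; exact gshift _ h2 n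
  have hGpi : Complex.Gamma (1/2 : ℂ) = pc (1/2 - n) n * Complex.Gamma (1/2 - n) := by
    have h := gshift ((1/2 : ℂ) - n) hhalf n
    rwa [show (1/2 : ℂ) - n + n = (1/2 : ℂ) from by ring] at h
  have hsqrt : ((Real.sqrt Real.pi : ℝ) : ℂ) = Complex.Gamma (1/2 : ℂ) := by
    rw [Complex.Gamma_one_half_eq, Real.sqrt_eq_rpow, Complex.ofReal_cpow Real.pi_nonneg]
    norm_num
  have gne1 : Complex.Gamma (b + 1/2) ≠ 0 := Complex.Gamma_ne_zero h1
  have gne2 : Complex.Gamma (a - n + 1/2) ≠ 0 := Complex.Gamma_ne_zero h2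
  have gne4 : Complex.Gamma (b - a + 1/2) ≠ 0 := Complex.Gamma_ne_zero h4
  have gneH : Complex.Gamma ((1/2 : ℂ) - n) ≠ 0 := Complex.Gamma_ne_zero hhalf
  have hrev1 : pc (1/2 - (n:ℂ)) n = (-1)^n * pc (1/2 : ℂ) n := by
    have h := pc_refl (1/2 : ℂ) n n le_rfl
    rw [Nat.sub_self, pc_zero, one_mul,
      show (1:ℂ) - 1/2 - n = 1/2 - (n:ℂ) from by ring] at h
    exact h
  have hrev2 : pc (a - (n:ℂ) + 1/2) n = (-1)^n * pc (1/2 - a) n := by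
    have h := pc_refl (1/2 - a) n n le_rfl
    rw [Nat.sub_self, pc_zero, one_mul,
      show (1:ℂ) - (1/2 - a) - n = a - (n:ℂ) + 1/2 from by ring] at h
    exact h
  have hsn : ((-1:ℂ))^n * (-1)^n = 1 := by rw [← mul_pow]; norm_num
  rw [hsqrt, hGpi, hG2, hG6, hG3, hrev1, hrev2]
  have hC := hpcC n
  rw [div_eq_div_iff (mul_ne_zero hC hpcE) (by
    apply_rules [mul_ne_zero, pow_ne_zero, hpcE, gne2, gneH, gne4, hC, gne1]
    norm_num)]
  ring
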